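/- Let W = 2m with sorted halves as in Proposition 2 and half-medians w m₀, w m₁. If w m₀ > w m₁, then the median (the element of rank W/2) of the full multiset lies in {w m₁, ..., w (W-1)} ∪ {w 0, ..., w m₀}; and if w m₀ = w m₁ then the median equals w m₀. -/

import Mathlib

lemma sorted_getElem_le {L : List ℝ} (hL : L.Pairwise (· ≤ ·)) {n : ℕ} (hn : n < L.length)
    {v : ℝ} (hc : n + 1 ≤ L.countP (fun x => decide (x ≤ v))) : L[n] ≤ v := by
  by_contra h
  push_neg at h
  have hsplit : L.countP (fun x => decide (x ≤ v)) =
      (L.take n).countP (fun x => decide (x ≤ v)) +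
      (L.drop n).countP (fun x => decide (x ≤ v)) := by
    conv_lhs => rw [← List.take_append_drop n L]
    exact List.countP_append
  have hdrop : (L.drop n).countP (fun x => decide (x ≤ v)) = 0 := by
    rw [List.countP_eq_zero]
    intro a ha
    obtain ⟨i, hi, rfl⟩ := List.mem_iff_getElem.mp ha
    rw [List.length_drop] at hi
    have hni : n + i < L.length := by omega
    simp only [decide_eq_true_eq]
    intro hle
    rw [List.getElem_drop] at hle
    have : L[n] ≤ L[n + i] := by
      rcases Nat.eq_or_lt_of_le (Nat.le_add_right n i) with he | hlt
      · simp [← he]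
      · exact List.pairwise_iff_getElem.mp hL _ _ _ _ hlt
    linarith
  have htake := (L.take n).countP_le_length (p := fun x => decide (x ≤ v))
  rw [List.length_take] at htake
  omega

lemma sorted_le_getElem {L : List ℝ} (hL : L.Pairwise (· ≤ ·)) {n : ℕ} (hn : n < L.length)
    {v : ℝ} (hc : L.length - n ≤ L.countP (fun x => decide (v ≤ x))) : v ≤ L[n] := by
  by_contra h
  push_neg at h
  have hsplit : L.countP (fun x => decide (v ≤ x)) =
      (L.take (n+1)).countP (fun x => decide (v ≤ x)) +
      (L.drop (n+1)).countP (fun x => decide (v ≤ x)) := by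
    conv_lhs => rw [← List.take_append_drop (n+1) L]
    exact List.countP_append
  have htake : (L.take (n+1)).countP (fun x => decide (v ≤ x)) = 0 := by
    rw [List.countP_eq_zero]
    intro a ha
    obtain ⟨i, hi, rfl⟩ := List.mem_iff_getElem.mp ha
    rw [List.length_take] at hi
    have hiL : i < L.length := by omega
    simp only [decide_eq_true_eq]
    intro hle
    rw [List.getElem_take] at hle
    have : L[i] ≤ L[n] := by
      rcases Nat.eq_or_lt_of_le (show i ≤ n by omega) with he | hlt
      · simp [he]
      · exact List.pairwise_iff_getElem.mp hL _ _ _ _ hlt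
    linarith
  have hdrop := (L.drop (n+1)).countP_le_length (p := fun x => decide (v ≤ x))
  rw [List.length_drop] at hdrop
  omega

theorem median_localization_gt_eq
    (m : ℕ) (hm : 1 ≤ m) (W : ℕ) (hW : W = 2 * m)
    (w : Fin W → ℝ)
    (hsorted₀ : ∀ i j : Fin W, (i : ℕ) ≤ j → (j : ℕ) < m → w i ≤ w j)
    (hsorted₁ : ∀ i j : Fin W, m ≤ (i : ℕ) → (i : ℕ) ≤ j → w i ≤ w j)
    (m₀ m₁ : Fin W)
    (hm₀ : (m₀ : ℕ) = m / 2)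
    (hm₁ : (m₁ : ℕ) = m + m / 2)
    (med : ℝ)
    (hmed : med = (Multiset.sort
        ((Finset.univ : Finset (Fin W)).val.map w) (· ≤ ·)).getD m 0) :
    (w m₁ < w m₀ →
      ∃ i : Fin W, (((m₁ : ℕ) ≤ i ∧ (i : ℕ) < W) ∨ ((i : ℕ) ≤ m₀)) ∧ med = w i) ∧
    (w m₀ = w m₁ → med = w m₀) := by
  set S := ((Finset.univ : Finset (Fin W)).val.map w) with hS
  set L := Multiset.sort S (· ≤ ·) with hL
  have hlen : L.length = W := by
    rw [hL, Multiset.length_sort, hS, Multiset.card_map]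
    simp
  have hmW : m < W := by omega
  have hmL : m < L.length := by omega
  have hsortedL : L.Pairwise (· ≤ ·) := Multiset.pairwise_sort _ _
  have hmed' : med = L[m] := by rw [hmed, List.getD_eq_getElem _ _ hmL]
  -- countP translation
  have hcount : ∀ (p : ℝ → Prop) [DecidablePred p],
      L.countP (fun x => decide (p x)) =
        (Finset.univ.filter (fun i => p (w i))).card := by
    intro p _
    have h1 : (L : Multiset ℝ).countP p = Multiset.countP p S := by
      rw [hL, Multiset.sort_eq]
    rw [Multiset.coe_countP] at h1
    rw [h1, hS, Multiset.countP_map]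
    rfl
  -- index facts
  have hmm : m / 2 < m := by omega
  have hm₁W : (m₁ : ℕ) < W := m₁.isLt
  -- bound A : m + 1 ≤ count (· ≤ v) when w m₀ ≤ v and w m₁ ≤ v
  have hA : ∀ v : ℝ, w m₀ ≤ v → w m₁ ≤ v →
      m + 1 ≤ L.countP (fun x => decide (x ≤ v)) := by
    intro v h0 h1
    rw [hcount]
    set mm : Fin W := ⟨m, hmW⟩ with hmmdef
    have hsub : Finset.Iic m₀ ∪ Finset.Icc mm m₁ ⊆
        Finset.univ.filter (fun i => w i ≤ v) := by
      intro i hi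
      simp only [Finset.mem_union, Finset.mem_Iic, Finset.mem_Icc] at hi
      simp only [Finset.mem_filter, Finset.mem_univ, true_and]
      rcases hi with hi | ⟨hi1, hi2⟩
      · exact le_trans (hsorted₀ i m₀ (Fin.le_def.mp hi) (by omega)) h0
      · exact le_trans (hsorted₁ i m₁ (by simpa [hmmdef, Fin.le_def] using hi1)
          (Fin.le_def.mp hi2)) h1
    have hdisj : Disjoint (Finset.Iic m₀) (Finset.Icc mm m₁) := by
      rw [Finset.disjoint_left]
      intro i hi hi'
      simp only [Finset.mem_Iic, Fin.le_def] at hi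
      simp only [Finset.mem_Icc, Fin.le_def] at hi'
      simp only [hmmdef] at hi'
      omega
    have hcard := Finset.card_le_card hsub
    rw [Finset.card_union_of_disjoint hdisj, Fin.card_Iic, Fin.card_Icc] at hcard
    simp only [hm₀, hm₁, hmmdef] at hcard
    omega
  -- bound B : m ≤ count (v ≤ ·) when v ≤ w m₀ and v ≤ w m₁
  have hB : ∀ v : ℝ, v ≤ w m₀ → v ≤ w m₁ →
      m ≤ L.countP (fun x => decide (v ≤ x)) := by
    intro v h0 h1
    rw [hcount]
    set mm : Fin W := ⟨m - 1, by omega⟩ with hmmdef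
    have hsub : Finset.Icc m₀ mm ∪ Finset.Ici m₁ ⊆
        Finset.univ.filter (fun i => v ≤ w i) := by
      intro i hi
      simp only [Finset.mem_union, Finset.mem_Icc, Finset.mem_Ici] at hi
      simp only [Finset.mem_filter, Finset.mem_univ, true_and]
      rcases hi with ⟨hi1, hi2⟩ | hi
      · refine le_trans h0 (hsorted₀ m₀ i (Fin.le_def.mp hi1) ?_)
        have := Fin.le_def.mp hi2
        simp only [hmmdef] at this
        omega
      · exact le_trans h1 (hsorted₁ m₁ i (by omega) (Fin.le_def.mp hi))
    have hdisj : Disjoint (Finset.Icc m₀ mm) (Finset.Ici m₁) := by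
      rw [Finset.disjoint_left]
      intro i hi hi'
      simp only [Finset.mem_Icc, Fin.le_def] at hi
      simp only [Finset.mem_Ici, Fin.le_def] at hi'
      simp only [hmmdef] at hi
      omega
    have hcard := Finset.card_le_card hsub
    rw [Finset.card_union_of_disjoint hdisj, Fin.card_Icc, Fin.card_Ici] at hcard
    simp only [hm₀, hm₁, hmmdef] at hcard
    omega
  -- combine: if w m₁ ≤ w m₀ then w m₁ ≤ med ≤ w m₀
  have hkey : w m₁ ≤ w m₀ → w m₁ ≤ med ∧ med ≤ w m₀ := by
    intro h10
    constructor
    · rw [hmed']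
      exact sorted_le_getElem hsortedL hmL (by have := hB (w m₁) h10 le_rfl; omega)
    · rw [hmed']
      exact sorted_getElem_le hsortedL hmL (by have := hA (w m₀) le_rfl h10; omega)
  constructor
  · intro hgt
    obtain ⟨hge, hle⟩ := hkey hgt.le
    have hmem : med ∈ S := by
      rw [hmed']
      rw [← Multiset.mem_sort (r := (· ≤ ·)), ← hL]
      exact List.getElem_mem _
    rw [hS, Multiset.mem_map] at hmem
    obtain ⟨i, _, hwi⟩ := hmem
    rcases Nat.lt_or_ge (i : ℕ) m with hi | hi
    · rcases le_or_gt (i : ℕ) (m₀ : ℕ) with h' | h'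
      · exact ⟨i, Or.inr h', hwi.symm⟩
      · -- m₀ < i < m : w m₀ ≤ w i = med ≤ w m₀
        refine ⟨m₀, Or.inr le_rfl, ?_⟩
        have : w m₀ ≤ w i := hsorted₀ m₀ i (by omega) hi
        linarith [hwi.symm ▸ this]
    · rcases le_or_gt (m₁ : ℕ) (i : ℕ) with h' | h'
      · exact ⟨i, Or.inl ⟨h', i.isLt⟩, hwi.symm⟩
      · -- m ≤ i < m₁ : med = w i ≤ w m₁ ≤ med
        refine ⟨m₁, Or.inl ⟨le_rfl, hm₁W⟩, ?_⟩
        have : w i ≤ w m₁ := hsorted₁ i m₁ hi (by omega)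
        linarith [hwi ▸ this]
  · intro heq
    obtain ⟨hge, hle⟩ := hkey heq.ge
    linarith [heq]
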